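/- arXiv:1911.01714 — 3 statements merged into one kernel-verified Lean document; each statement's English description precedes it below -/
import Mathlib

section
/- Let μ be a valuation on K[x] extending v, let φ be a key polynomial for μ, and let f ∈ K[x] be a monic non-constant polynomial. Then μ(f)/deg(f) ≤ μ(φ)/deg(φ) in Λ⊗ℚ, with equality if and only if f is μ-minimal. -/
open Polynomial Finset

variable {K : Type*} [Field K] {Λ : Type*} [AddCommGroup Λ] [LinearOrder Λ] [IsOrderedAddMonoid Λ]

/-- `v` is a valuation on the field `K` with values in `Λ∞ = WithTop Λ`. -/
def IsVal (v : K → WithTop Λ) : Prop :=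
  (∀ a, v a = ⊤ ↔ a = 0) ∧ v 1 = 0 ∧ (∀ a b, v (a * b) = v a + v b) ∧
    (∀ a b, min (v a) (v b) ≤ v (a + b))

/-- `μ` is a valuation on `K[x]` extending `v`. -/
def ExtVal (v : K → WithTop Λ) (μ : Polynomial K → WithTop Λ) : Prop :=
  (∀ f g, μ (f * g) = μ f + μ g) ∧ (∀ f g, min (μ f) (μ g) ≤ μ (f + g)) ∧
    (∀ a, μ (Polynomial.C a) = v a)

/-- `h` divides `g` μ-equivalently (`h ∣_μ g`): there is `q` with `μ(g - q h) > μ(g)`. -/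
def MuDvd (μ : Polynomial K → WithTop Λ) (h g : Polynomial K) : Prop :=
  ∃ q : Polynomial K, μ g < μ (g - q * h)

/-- `φ` is μ-minimal: `φ ∤_μ f` for every nonzero `f` of degree less than `deg φ`. -/
def MuMinimal (μ : Polynomial K → WithTop Λ) (φ : Polynomial K) : Prop :=
  ∀ f : Polynomial K, f ≠ 0 → f.degree < φ.degree → ¬ MuDvd μ φ f

/-- `φ` is μ-irreducible: the principal ideal generated by `in_μ φ` in the graded
algebra is a nonzero prime ideal (stated via μ-divisibility). -/
def MuIrreducible (μ : Polynomial K → WithTop Λ) (φ : Polynomial K) : Prop :=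
  μ φ ≠ ⊤ ∧ ¬ MuDvd μ φ 1 ∧
    ∀ f g : Polynomial K, MuDvd μ φ (f * g) → MuDvd μ φ f ∨ MuDvd μ φ g

/-- A (MacLane–Vaquié) key polynomial for `μ`. -/
def KeyPoly (μ : Polynomial K → WithTop Λ) (φ : Polynomial K) : Prop :=
  φ.Monic ∧ MuMinimal μ φ ∧ MuIrreducible μ φ

/-- `μ'` is the augmented valuation `[μ; φ, γ]`: on φ-expansions
`f = Σ a_s φ^s` (with `deg a_s < deg φ`), `μ' f = min_s (μ(a_s) + s·γ)`. -/
def AugVal (μ : Polynomial K → WithTop Λ) (φ : Polynomial K) (γ : WithTop Λ)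
    (μ' : Polynomial K → WithTop Λ) : Prop :=
  ∀ (f : Polynomial K) (n : ℕ) (a : ℕ → Polynomial K),
    (∀ s, (a s).degree < φ.degree) →
    f = ∑ s ∈ Finset.range n, a s * φ ^ s →
    μ' f = (Finset.range n).inf fun s => μ (a s) + s • γ


section Basics

variable {v : K → WithTop Λ} {μ : Polynomial K → WithTop Λ}

lemma mu_zero (hv : IsVal v) (hμ : ExtVal v μ) : μ 0 = ⊤ := by
  have h := hμ.2.2 0
  rw [Polynomial.C_0] at h
  rw [h, (hv.1 0).2 rfl]

lemma mu_one (hv : IsVal v) (hμ : ExtVal v μ) : μ 1 = 0 := by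
  have h := hμ.2.2 1
  rw [Polynomial.C_1] at h
  rw [h, hv.2.1]

lemma vneg_one (hv : IsVal v) : v (-1) = 0 := by
  have h := hv.2.2.1 (-1) (-1)
  rw [neg_mul_neg, one_mul, hv.2.1] at h
  rcases (eq_or_ne (v (-1)) ⊤) with ht | ht
  · rw [ht] at h; simp at h
  · lift (v (-1)) to Λ using ht with a ha
    have : a + a = 0 := by exact_mod_cast h.symm
    have : a = 0 := by
      rcases lt_trichotomy a 0 with h' | h' | h'
      · exfalso; have h2 := add_lt_add h' h'; rw [this, add_zero] at h2; exact lt_irrefl _ h2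
      · exact h'
      · exfalso; have h2 := add_lt_add h' h'; rw [this, add_zero] at h2; exact lt_irrefl _ h2
    simp [this]

lemma mu_neg (hv : IsVal v) (hμ : ExtVal v μ) (X : Polynomial K) : μ (-X) = μ X := by
  have : -X = Polynomial.C (-1) * X := by
    rw [map_neg, Polynomial.C_1, neg_one_mul]
  rw [this, hμ.1, hμ.2.2, vneg_one hv, zero_add]

lemma mu_min_le_sub (hv : IsVal v) (hμ : ExtVal v μ) (X Y : Polynomial K) :
    min (μ X) (μ Y) ≤ μ (X - Y) := by
  have := hμ.2.1 X (-Y)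
  rw [mu_neg hv hμ Y] at this
  simpa [sub_eq_add_neg] using this

lemma mu_add_eq_left (hv : IsVal v) (hμ : ExtVal v μ) {X Y : Polynomial K}
    (h : μ X < μ Y) : μ (X + Y) = μ X := by
  refine le_antisymm ?_ ?_
  · by_contra hc
    push_neg at hc
    have h2 : min (μ (X + Y)) (μ Y) ≤ μ X := by
      have := mu_min_le_sub hv hμ (X + Y) Y
      simpa using this
    rcases min_le_iff.1 h2 with h3 | h3
    · exact absurd h3 (not_le.2 hc)
    · exact absurd h3 (not_le.2 h)
  · calc μ X = min (μ X) (μ Y) := (min_eq_left h.le).symm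
    _ ≤ μ (X + Y) := hμ.2.1 X Y

lemma mu_sub_eq_left (hv : IsVal v) (hμ : ExtVal v μ) {X Y : Polynomial K}
    (h : μ X < μ Y) : μ (X - Y) = μ X := by
  rw [sub_eq_add_neg]
  exact mu_add_eq_left hv hμ (by rwa [mu_neg hv hμ])

/-- if μ(X - Y) > μ X then μ Y = μ X -/
lemma mu_eq_of_sub_lt (hv : IsVal v) (hμ : ExtVal v μ) {X Y : Polynomial K}
    (h : μ X < μ (X - Y)) : μ Y = μ X := by
  have : Y = X - (X - Y) := by ring
  rw [this]
  rw [mu_sub_eq_left hv hμ h]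

lemma mu_pow (hv : IsVal v) (hμ : ExtVal v μ) (X : Polynomial K) (k : ℕ) :
    μ (X ^ k) = k • μ X := by
  induction k with
  | zero => simpa [pow_zero] using mu_one hv hμ
  | succ k ih => rw [pow_succ, hμ.1, ih, succ_nsmul]

lemma mu_sum_ge (hv : IsVal v) (hμ : ExtVal v μ) {ι : Type*} (T : Finset ι)
    (F : ι → Polynomial K) : T.inf (fun i => μ (F i)) ≤ μ (∑ i ∈ T, F i) := by
  classical
  induction T using Finset.induction with
  | empty => simp [mu_zero hv hμ]
  | insert _ _ hx ih =>
    rename_i a s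
    rw [Finset.sum_insert hx, Finset.inf_insert]
    calc (μ (F a)) ⊓ (s.inf fun i => μ (F i)) ≤ min (μ (F a)) (μ (∑ i ∈ s, F i)) := by
          exact inf_le_inf le_rfl ih
    _ ≤ _ := hμ.2.1 _ _

lemma nsmul_ne_top {a : WithTop Λ} (h : a ≠ ⊤) (k : ℕ) : k • a ≠ ⊤ := by
  lift a to Λ using h with b
  induction k with
  | zero => simp
  | succ k ih =>
    rw [succ_nsmul]
    exact WithTop.add_ne_top.2 ⟨ih, WithTop.coe_ne_top⟩

lemma add_lt_add_right_withtop {a b c : WithTop Λ} (hc : c ≠ ⊤) (h : a < b) :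
    a + c < b + c := WithTop.add_lt_add_right hc h

lemma lt_of_add_lt_add_right_withtop {a b c : WithTop Λ} (h : a + c < b + c) : a < b := by
  by_contra hc
  push_neg at hc
  exact absurd (add_le_add_left hc c) (not_le.2 h)

lemma lt_of_add_lt_add_left_withtop {a b c : WithTop Λ} (h : c + a < c + b) : a < b := by
  by_contra hc
  push_neg at hc
  exact absurd (add_le_add_right hc c) (not_le.2 h)

end Basics

section Expansion

variable {v : K → WithTop Λ} {μ : Polynomial K → WithTop Λ} {φ : Polynomial K}

/-- Existence of φ-adic expansions. -/
lemma exp_exists (hφm : φ.Monic) (hn : 0 < φ.natDegree) :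
    ∀ (N : ℕ) (X : Polynomial K), X.degree < ((φ.natDegree * N : ℕ) : WithBot ℕ) →
    ∃ a : ℕ → Polynomial K, (∀ s, (a s).degree < φ.degree) ∧
      X = ∑ s ∈ range N, a s * φ ^ s := by
  have hφ0 : (0 : Polynomial K).degree < φ.degree := by
    rw [Polynomial.degree_zero]
    exact lt_of_lt_of_le (WithBot.bot_lt_coe 0) (by
      rw [Polynomial.degree_eq_natDegree hφm.ne_zero]; exact_mod_cast Nat.zero_le _)
  intro N
  induction N with
  | zero =>
    intro X hX
    refine ⟨fun _ => 0, fun _ => hφ0, ?_⟩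
    simp only [Finset.range_zero, Finset.sum_empty]
    by_contra hX0
    have := Polynomial.degree_eq_natDegree hX0
    rw [this] at hX
    simp at hX
  | succ N ih =>
    intro X hX
    have hmod : (X %ₘ φ).degree < φ.degree := Polynomial.degree_modByMonic_lt X hφm
    have hdiv : (X /ₘ φ).degree < ((φ.natDegree * N : ℕ) : WithBot ℕ) := by
      by_cases hd0 : X /ₘ φ = 0
      · rw [hd0, Polynomial.degree_zero]; exact WithBot.bot_lt_coe _
      · have hX0 : X ≠ 0 := by
          intro h; rw [h, Polynomial.zero_divByMonic] at hd0; exact hd0 rfl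
        have h1 : (X /ₘ φ).natDegree = X.natDegree - φ.natDegree :=
          Polynomial.natDegree_divByMonic X hφm
        have h2 : X.natDegree < φ.natDegree * (N + 1) := by
          have := (Polynomial.degree_eq_natDegree hX0) ▸ hX
          exact_mod_cast this
        have h3 : φ.natDegree ≤ X.natDegree := by
          by_contra hc
          push_neg at hc
          have : X.degree < φ.degree := by
            rw [Polynomial.degree_eq_natDegree hX0, Polynomial.degree_eq_natDegree hφm.ne_zero]
            exact_mod_cast hc
          exact hd0 ((Polynomial.divByMonic_eq_zero_iff hφm).2 this)
        rw [Polynomial.degree_eq_natDegree hd0, h1]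
        have hb : φ.natDegree * (N + 1) = φ.natDegree * N + φ.natDegree := by ring
        have h4 : X.natDegree - φ.natDegree < φ.natDegree * N := by omega
        exact_mod_cast h4
    obtain ⟨a', ha', hsum⟩ := ih (X /ₘ φ) hdiv
    refine ⟨fun s => if s = 0 then X %ₘ φ else a' (s - 1), ?_, ?_⟩
    · intro s
      by_cases h : s = 0 <;> simp [h, hmod, ha']
    · rw [Finset.sum_range_succ']
      simp only [Nat.succ_ne_zero, if_false, Nat.add_sub_cancel, if_true, pow_zero, mul_one]
      have h5 : ∑ x ∈ range N, a' x * φ ^ (x + 1) = (X /ₘ φ) * φ := by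
        rw [hsum, Finset.sum_mul]
        exact Finset.sum_congr rfl fun i _ => by ring
      rw [h5]
      have h6 := Polynomial.modByMonic_add_div X φ
      linear_combination -h6

/-- Degree bound for φ-adic sums over an arbitrary index set. -/
lemma exp_deg_lt (hφm : φ.Monic) (hn : 0 < φ.natDegree) (a : ℕ → Polynomial K)
    (ha : ∀ s, (a s).degree < φ.degree) (T : Finset ℕ) (B : ℕ)
    (hT : ∀ s ∈ T, s < B) :
    (∑ s ∈ T, a s * φ ^ s).degree < ((φ.natDegree * B : ℕ) : WithBot ℕ) := by
  refine lt_of_le_of_lt (Polynomial.degree_sum_le _ _) ?_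
  rw [Finset.sup_lt_iff (by exact WithBot.bot_lt_coe _)]
  intro s hs
  by_cases h0 : a s = 0
  · rw [h0, zero_mul, Polynomial.degree_zero]; exact WithBot.bot_lt_coe _
  · rw [Polynomial.degree_mul, Polynomial.degree_pow,
      Polynomial.degree_eq_natDegree h0, Polynomial.degree_eq_natDegree hφm.ne_zero]
    have h1 : (a s).natDegree < φ.natDegree := by
      have := (Polynomial.degree_eq_natDegree h0) ▸ ha s
      rw [Polynomial.degree_eq_natDegree hφm.ne_zero] at this
      exact_mod_cast this
    have h2 : s < B := hT s hs
    have : ((a s).natDegree : WithBot ℕ) + s • (φ.natDegree : WithBot ℕ)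
        = (((a s).natDegree + s * φ.natDegree : ℕ) : WithBot ℕ) := by
      push_cast [nsmul_eq_mul]
      try ring
    rw [this]
    have hfin : (a s).natDegree + s * φ.natDegree < φ.natDegree * B := by nlinarith
    exact_mod_cast hfin
end Expansion

section LemA

variable {v : K → WithTop Λ} {μ : Polynomial K → WithTop Λ} {φ : Polynomial K}

/-- Lemma A: for a μ-minimal monic φ, φ-adic expansions compute μ. -/
lemma lemA (hv : IsVal v) (hμ : ExtVal v μ)
    (hφm : φ.Monic) (hmin : MuMinimal μ φ) (hμφ : μ φ ≠ ⊤)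
    (a : ℕ → Polynomial K) (ha : ∀ s, (a s).degree < φ.degree) (N : ℕ) :
    μ (∑ s ∈ range N, a s * φ ^ s) = (range N).inf (fun s => μ (a s) + s • μ φ) := by
  classical
  set X := ∑ s ∈ range N, a s * φ ^ s with hX
  have hterm : ∀ s, μ (a s * φ ^ s) = μ (a s) + s • μ φ := by
    intro s; rw [hμ.1, mu_pow hv hμ]
  have hge : (range N).inf (fun s => μ (a s) + s • μ φ) ≤ μ X := by
    calc (range N).inf (fun s => μ (a s) + s • μ φ)
        = (range N).inf (fun s => μ (a s * φ ^ s)) :=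
          Finset.inf_congr rfl (fun s _ => (hterm s).symm)
      _ ≤ μ X := mu_sum_ge hv hμ (range N) (fun s => a s * φ ^ s)
  refine le_antisymm ?_ hge
  by_contra hc
  push_neg at hc
  set w := (range N).inf (fun s => μ (a s) + s • μ φ) with hw
  have hwlt : w < μ X := hc
  have hwtop : w ≠ ⊤ := fun h => absurd (h ▸ hwlt) (by simp)
  have hNpos : 0 < N := by
    rcases Nat.eq_zero_or_pos N with h | h
    · subst h; simp [hw] at hwtop
    · exact h
  obtain ⟨j, hjmem, hjw⟩ := Finset.exists_mem_eq_inf (range N) ⟨0, Finset.mem_range.2 hNpos⟩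
    (fun s => μ (a s) + s • μ φ)
  have hex : ∃ s, s < N ∧ μ (a s) + s • μ φ ≤ w := ⟨j, Finset.mem_range.1 hjmem, le_of_eq hjw.symm⟩
  set s₀ := Nat.find hex with hs₀
  obtain ⟨hs₀N, hs₀le⟩ := Nat.find_spec hex
  have hs₀w : μ (a s₀) + s₀ • μ φ = w := by
    refine le_antisymm hs₀le ?_
    rw [hw]
    exact Finset.inf_le (Finset.mem_range.2 hs₀N)
  have hlow : ∀ s < s₀, w < μ (a s) + s • μ φ := by
    intro s hs
    have hsN : s < N := lt_trans hs hs₀N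
    have h := Nat.find_min hex hs
    push_neg at h
    exact h hsN
  set R := ∑ s ∈ range s₀, a s * φ ^ s with hR
  have hμR : w < μ R := by
    refine lt_of_lt_of_le ?_ (mu_sum_ge hv hμ (range s₀) _)
    rw [Finset.lt_inf_iff (lt_of_le_of_ne le_top hwtop)]
    intro s hs
    rw [hterm s]
    exact hlow s (Finset.mem_range.1 hs)
  set C := ∑ s ∈ Ico (s₀ + 1) N, a s * φ ^ (s - s₀ - 1) with hCdef
  have hsplit : X - R = φ ^ s₀ * (a s₀ + φ * C) := by
    have h1 : R + ∑ s ∈ Ico s₀ N, a s * φ ^ s = X := by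
      rw [hR, hX]
      exact Finset.sum_range_add_sum_Ico _ (le_of_lt hs₀N)
    have h2 : ∑ s ∈ Ico s₀ N, a s * φ ^ s
        = a s₀ * φ ^ s₀ + ∑ s ∈ Ico (s₀ + 1) N, a s * φ ^ s :=
      Finset.sum_eq_sum_Ico_succ_bot hs₀N _
    have h3 : ∑ s ∈ Ico (s₀ + 1) N, a s * φ ^ s = φ ^ (s₀ + 1) * C := by
      rw [hCdef, Finset.mul_sum]
      refine Finset.sum_congr rfl fun s hs => ?_
      obtain ⟨h1s, _⟩ := Finset.mem_Ico.1 hs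
      have he : s₀ + 1 + (s - s₀ - 1) = s := by omega
      have h4 : φ ^ (s₀ + 1) * (a s * φ ^ (s - s₀ - 1)) = a s * φ ^ (s₀ + 1 + (s - s₀ - 1)) := by
        rw [pow_add]; ring
      rw [h4, he]
    rw [← h1, h2, h3]
    rw [pow_succ]
    ring
  have hXR : w < μ (X - R) := lt_of_lt_of_le (lt_min hwlt hμR) (mu_min_le_sub hv hμ X R)
  rw [hsplit, hμ.1, mu_pow hv hμ] at hXR
  have hcan : μ (a s₀) < μ (a s₀ + φ * C) := by
    have h1 : μ (a s₀) + s₀ • μ φ < μ (a s₀ + φ * C) + s₀ • μ φ := by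
      rw [hs₀w, add_comm (μ (a s₀ + φ * C))]
      exact hXR
    exact lt_of_add_lt_add_right_withtop h1
  have hdvd : MuDvd μ φ (a s₀) := by
    refine ⟨-C, ?_⟩
    have he : a s₀ - (-C) * φ = a s₀ + φ * C := by ring
    rw [he]
    exact hcan
  have ha0 : a s₀ ≠ 0 := by
    intro h0
    rw [h0, mu_zero hv hμ, top_add] at hs₀w
    exact hwtop hs₀w.symm
  exact hmin (a s₀) ha0 (ha s₀) hdvd

/-- Division pair computes μ for polynomials of degree < 2 deg φ. -/
lemma mu_divpair (hv : IsVal v) (hμ : ExtVal v μ)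
    (hφm : φ.Monic) (hmin : MuMinimal μ φ) (hn : 0 < φ.natDegree) (hμφ : μ φ ≠ ⊤)
    (X : Polynomial K) (hXd : X.degree < ((φ.natDegree * 2 : ℕ) : WithBot ℕ)) :
    μ X = min (μ (X %ₘ φ)) (μ (X /ₘ φ) + μ φ) := by
  have hdiv : (X /ₘ φ).degree < φ.degree := by
    by_cases hd0 : X /ₘ φ = 0
    · rw [hd0, Polynomial.degree_zero, Polynomial.degree_eq_natDegree hφm.ne_zero]
      exact WithBot.bot_lt_coe _
    · have hX0 : X ≠ 0 := fun h => hd0 (by rw [h, Polynomial.zero_divByMonic])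
      have h1 : (X /ₘ φ).natDegree = X.natDegree - φ.natDegree :=
        Polynomial.natDegree_divByMonic X hφm
      have h2 : X.natDegree < φ.natDegree * 2 := by
        have := (Polynomial.degree_eq_natDegree hX0) ▸ hXd
        exact_mod_cast this
      rw [Polynomial.degree_eq_natDegree hd0, Polynomial.degree_eq_natDegree hφm.ne_zero, h1]
      exact_mod_cast by omega
  set a : ℕ → Polynomial K := fun s => if s = 0 then X %ₘ φ else if s = 1 then X /ₘ φ else 0
  have ha : ∀ s, (a s).degree < φ.degree := by
    intro s
    by_cases h0 : s = 0
    · simpa [a, h0] using Polynomial.degree_modByMonic_lt X hφm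
    · by_cases h1 : s = 1
      · simpa [a, h0, h1] using hdiv
      · simp only [a, h0, h1, if_false]
        rw [Polynomial.degree_zero, Polynomial.degree_eq_natDegree hφm.ne_zero]
        exact WithBot.bot_lt_coe _
  have hXeq : X = ∑ s ∈ range 2, a s * φ ^ s := by
    rw [Finset.sum_range_succ, Finset.sum_range_one]
    simp only [a, if_true, pow_zero, mul_one, pow_one, one_ne_zero, if_false]
    have := Polynomial.modByMonic_add_div X φ
    linear_combination -this
  have hval := lemA hv hμ hφm hmin hμφ a ha 2
  rw [← hXeq] at hval
  rw [hval, show range 2 = {0, 1} by rfl, Finset.inf_insert]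
  simp [a, Finset.inf_singleton]

end LemA

section Atom

variable {v : K → WithTop Λ} {μ : Polynomial K → WithTop Λ} {φ : Polynomial K}

/-- Linearity of division by a monic polynomial (difference version). -/
lemma divByMonic_sub (hφm : φ.Monic) (X Y : Polynomial K) :
    (X - Y) /ₘ φ = X /ₘ φ - Y /ₘ φ := by
  have h : (X %ₘ φ - Y %ₘ φ) + φ * (X /ₘ φ - Y /ₘ φ) = X - Y := by
    have hX := Polynomial.modByMonic_add_div X φ
    have hY := Polynomial.modByMonic_add_div Y φ
    ring_nf
    linear_combination hX - hY
  have hdeg : (X %ₘ φ - Y %ₘ φ).degree < φ.degree :=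
    lt_of_le_of_lt (Polynomial.degree_sub_le _ _)
      (max_lt (Polynomial.degree_modByMonic_lt X hφm) (Polynomial.degree_modByMonic_lt Y hφm))
  exact (Polynomial.div_modByMonic_unique _ _ hφm ⟨h, hdeg⟩).1

/-- value bound for the division carry, deg X < 2 deg φ. -/
lemma mu_div_ge (hv : IsVal v) (hμ : ExtVal v μ)
    (hφm : φ.Monic) (hmin : MuMinimal μ φ) (hn : 0 < φ.natDegree) (hμφ : μ φ ≠ ⊤)
    (X : Polynomial K) (hXd : X.degree < ((φ.natDegree * 2 : ℕ) : WithBot ℕ)) :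
    μ X ≤ μ (X /ₘ φ) + μ φ :=
  (mu_divpair hv hμ hφm hmin hn hμφ X hXd).le.trans (by exact min_le_right _ _) |>.trans le_rfl

lemma deg_mul_lt_two (hφm : φ.Monic) {X Y : Polynomial K}
    (hX : X.degree < φ.degree) (hY : Y.degree < φ.degree) :
    (X * Y).degree < ((φ.natDegree * 2 : ℕ) : WithBot ℕ) := by
  by_cases h0 : X = 0
  · rw [h0, zero_mul, Polynomial.degree_zero]; exact WithBot.bot_lt_coe _
  by_cases h1 : Y = 0
  · rw [h1, mul_zero, Polynomial.degree_zero]; exact WithBot.bot_lt_coe _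
  rw [Polynomial.degree_eq_natDegree h0, Polynomial.degree_eq_natDegree hφm.ne_zero] at hX
  rw [Polynomial.degree_eq_natDegree h1, Polynomial.degree_eq_natDegree hφm.ne_zero] at hY
  have hx : X.natDegree < φ.natDegree := by exact_mod_cast hX
  have hy : Y.natDegree < φ.natDegree := by exact_mod_cast hY
  rw [Polynomial.degree_mul, Polynomial.degree_eq_natDegree h0, Polynomial.degree_eq_natDegree h1]
  have hfin : X.natDegree + Y.natDegree < φ.natDegree * 2 := by omega
  exact_mod_cast hfin

/-- ATOM: for smalls c and h with μ h = μ φ, the carry of c·h cannot cancel c. -/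
lemma atom (hv : IsVal v) (hμ : ExtVal v μ)
    (hsupp : ∀ f : Polynomial K, f ≠ 0 → μ f ≠ ⊤)
    (hφm : φ.Monic) (hmin : MuMinimal μ φ) (hn : 0 < φ.natDegree) (hμφ : μ φ ≠ ⊤)
    (h : Polynomial K) (hh : h.degree < φ.degree) (hμh : μ h = μ φ) :
    ∀ c : Polynomial K, c ≠ 0 → c.degree < φ.degree →
      μ (c + (c * h) /ₘ φ) = μ c := by
  have hh0 : h ≠ 0 := by
    intro h0
    rw [h0, mu_zero hv hμ] at hμh
    exact hμφ hμh.symm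
  suffices H : ∀ d : ℕ, ∀ c : Polynomial K, c.natDegree = d → c ≠ 0 → c.degree < φ.degree →
      μ (c + (c * h) /ₘ φ) = μ c by
    intro c hc0 hcd
    exact H c.natDegree c rfl hc0 hcd
  intro d
  induction d using Nat.strong_induction_on with
  | _ d ih =>
  intro c hc hc0 hcd
  set e₁ := (c * h) /ₘ φ with he₁
  have hch0 : c * h ≠ 0 := mul_ne_zero hc0 hh0
  have hchd : (c * h).degree < ((φ.natDegree * 2 : ℕ) : WithBot ℕ) := deg_mul_lt_two hφm hcd hh
  have hμch : μ (c * h) = μ c + μ φ := by rw [hμ.1, hμh]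
  have hctop : μ c ≠ ⊤ := hsupp c hc0
  have he₁ge : μ c ≤ μ e₁ := by
    have h1 : μ (c * h) ≤ μ e₁ + μ φ := mu_div_ge hv hμ hφm hmin hn hμφ _ hchd
    rw [hμch] at h1
    by_contra hlt
    push_neg at hlt
    have := add_lt_add_right_withtop hμφ hlt
    exact absurd h1 (not_le.2 this)
  have hbase : μ c ≤ μ (c + e₁) := by
    calc μ c = min (μ c) (μ e₁) := (min_eq_left he₁ge).symm
      _ ≤ μ (c + e₁) := hμ.2.1 c e₁
  rcases eq_or_lt_of_le hbase with heq | hbad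
  · exact heq.symm
  -- bad case: descent
  exfalso
  have he₁c : μ e₁ = μ c := by
    rcases eq_or_lt_of_le he₁ge with h1 | h1
    · exact h1.symm
    · rw [mu_add_eq_left hv hμ h1] at hbad
      exact absurd hbad (lt_irrefl _)
  have he₁0 : e₁ ≠ 0 := by
    intro h0
    rw [h0, mu_zero hv hμ] at he₁c
    exact hctop he₁c.symm
  -- degree of e₁
  have hd1 : e₁.natDegree < c.natDegree := by
    have h1 : e₁.natDegree = (c * h).natDegree - φ.natDegree :=
      Polynomial.natDegree_divByMonic _ hφm
    have h2 : (c * h).natDegree = c.natDegree + h.natDegree := Polynomial.natDegree_mul hc0 hh0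
    have h3 : h.natDegree < φ.natDegree := by
      have := hh
      rw [Polynomial.degree_eq_natDegree hh0, Polynomial.degree_eq_natDegree hφm.ne_zero] at this
      exact_mod_cast this
    have h4 : ¬ ((c * h).degree < φ.degree) := by
      intro hlt
      exact he₁0 ((Polynomial.divByMonic_eq_zero_iff hφm).2 hlt)
    have h5 : φ.natDegree ≤ (c * h).natDegree := by
      by_contra hcon
      push_neg at hcon
      refine h4 ?_
      rw [Polynomial.degree_eq_natDegree hch0, Polynomial.degree_eq_natDegree hφm.ne_zero]
      exact_mod_cast hcon
    omega
  set c' := -e₁ with hc'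
  have hc'0 : c' ≠ 0 := by simpa [hc'] using he₁0
  have hμc' : μ c' = μ c := by rw [hc', mu_neg hv hμ, he₁c]
  have hc'd : c'.degree < φ.degree := by
    rw [hc', Polynomial.degree_neg]
    calc e₁.degree ≤ c.degree := by
          rw [Polynomial.degree_eq_natDegree he₁0, Polynomial.degree_eq_natDegree hc0]
          exact_mod_cast hd1.le
      _ < φ.degree := hcd
  -- difference value
  have hδ : μ (c' - c) > μ c := by
    have : c' - c = -(c + e₁) := by rw [hc']; ring
    rw [this, mu_neg hv hμ]
    exact hbad
  have hδd : (c' - c).degree < φ.degree :=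
    lt_of_le_of_lt (Polynomial.degree_sub_le _ _) (max_lt hc'd hcd)
  have hcarrydiff : μ ((c' * h) /ₘ φ - e₁) > μ c := by
    have h1 : (c' * h) /ₘ φ - e₁ = ((c' - c) * h) /ₘ φ := by
      rw [he₁, ← divByMonic_sub hφm]
      ring_nf
    rw [h1]
    by_cases hz : (c' - c) * h = 0
    · rw [hz, Polynomial.zero_divByMonic, mu_zero hv hμ]
      exact lt_top_iff_ne_top.2 hctop
    · have h2 : μ ((c' - c) * h) ≤ μ (((c' - c) * h) /ₘ φ) + μ φ :=
        mu_div_ge hv hμ hφm hmin hn hμφ _ (deg_mul_lt_two hφm hδd hh)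
      rw [hμ.1, hμh] at h2
      by_contra hcon
      push_neg at hcon
      have h3 : μ (((c' - c) * h) /ₘ φ) + μ φ ≤ μ c + μ φ := add_le_add_left hcon _
      have h4 : μ (c' - c) + μ φ ≤ μ c + μ φ := le_trans h2 h3
      have h5 : μ (c' - c) ≤ μ c := by
        by_contra h6
        push_neg at h6
        exact absurd h4 (not_le.2 (add_lt_add_right_withtop hμφ h6))
      exact absurd h5 (not_le.2 hδ)
  -- bad for c'
  have hbad' : μ c' < μ (c' + (c' * h) /ₘ φ) := by
    have hsum : c' + (c' * h) /ₘ φ = (c + e₁) + (c' - c) + ((c' * h) /ₘ φ - e₁) := by ring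
    rw [hsum, hμc']
    have hq1 : μ c < μ ((c + e₁) + (c' - c)) := by
      calc μ c < min (μ (c + e₁)) (μ (c' - c)) := lt_min hbad hδ
        _ ≤ μ ((c + e₁) + (c' - c)) := hμ.2.1 _ _
    calc μ c < min (μ ((c + e₁) + (c' - c))) (μ ((c' * h) /ₘ φ - e₁)) := lt_min hq1 hcarrydiff
      _ ≤ _ := hμ.2.1 _ _
  have hlt : c'.natDegree < d := by
    rw [hc', Polynomial.natDegree_neg]
    omega
  have hfin := ih c'.natDegree hlt c' rfl hc'0 hc'd
  rw [hfin] at hbad'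
  exact absurd hbad' (lt_irrefl _)

end Atom

section L1

variable {v : K → WithTop Λ} {μ : Polynomial K → WithTop Λ} {φ : Polynomial K}

/-- The value-degree inequality for a μ-minimal monic p against any monic F. -/
lemma L1 (hv : IsVal v) (hμ : ExtVal v μ)
    {p : Polynomial K} (hpm : p.Monic) (hmin : MuMinimal μ p) (hn : 0 < p.natDegree)
    (hμp : μ p ≠ ⊤) (F : Polynomial K) (hF : F.Monic) :
    p.natDegree • μ F ≤ F.natDegree • μ p := by
  set n := p.natDegree with hnn
  set M := F.natDegree with hM
  rcases Nat.eq_zero_or_pos M with hM0 | hMpos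
  · have : F = 1 := hF.natDegree_eq_zero.1 hM0
    rw [this, mu_one hv hμ, hM0, smul_zero, zero_smul]
  have hmonFn : (F ^ n).Monic := hF.pow n
  have hmonpM : (p ^ M).Monic := hpm.pow M
  have hdeg_eq : (F ^ n).degree = (p ^ M).degree := by
    rw [Polynomial.degree_pow, Polynomial.degree_pow,
      Polynomial.degree_eq_natDegree hF.ne_zero, Polynomial.degree_eq_natDegree hpm.ne_zero,
      hnn, hM, nsmul_eq_mul, nsmul_eq_mul]
    push_cast
    ring
  by_cases hzero : F ^ n - p ^ M = 0
  · have : F ^ n = p ^ M := by linear_combination hzero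
    have h1 : μ (F ^ n) = μ (p ^ M) := by rw [this]
    rw [mu_pow hv hμ, mu_pow hv hμ] at h1
    exact le_of_eq h1
  have hdlt : (F ^ n - p ^ M).degree < ((n * M : ℕ) : WithBot ℕ) := by
    have h1 := Polynomial.degree_sub_lt hdeg_eq hmonFn.ne_zero (by rw [hmonFn.leadingCoeff, hmonpM.leadingCoeff])
    rw [hdeg_eq, Polynomial.degree_pow, Polynomial.degree_eq_natDegree hpm.ne_zero] at h1
    have h2 : (M • (p.natDegree : WithBot ℕ)) = ((n * M : ℕ) : WithBot ℕ) := by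
      rw [nsmul_eq_mul, hnn]
      push_cast
      ring
    rwa [h2] at h1
  obtain ⟨a, ha, hsum⟩ := exp_exists hpm hn M _ hdlt
  set b : ℕ → Polynomial K := fun s => if s = M then 1 else a s with hb
  have hbdeg : ∀ s, (b s).degree < p.degree := by
    intro s
    by_cases hs : s = M
    · simp only [hb, hs, if_true]
      rw [Polynomial.degree_one, Polynomial.degree_eq_natDegree hpm.ne_zero]
      exact_mod_cast hn
    · simp only [hb, hs, if_false]
      exact ha s
  have hFn : F ^ n = ∑ s ∈ range (M + 1), b s * p ^ s := by
    rw [Finset.sum_range_succ]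
    have h1 : ∑ s ∈ range M, b s * p ^ s = ∑ s ∈ range M, a s * p ^ s := by
      refine Finset.sum_congr rfl fun s hs => ?_
      have : s ≠ M := Nat.ne_of_lt (Finset.mem_range.1 hs)
      simp [hb, this]
    rw [h1, ← hsum]
    simp only [hb, if_true]
    ring

  have hval := lemA hv hμ hpm hmin hμp b hbdeg (M + 1)
  rw [← hFn] at hval
  have hle : μ (F ^ n) ≤ μ (b M) + M • μ p := by
    rw [hval]
    exact Finset.inf_le (Finset.mem_range.2 (Nat.lt_succ_self M))
  have hbM : b M = 1 := by simp [hb]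
  rw [hbM, mu_one hv hμ, zero_add, mu_pow hv hμ] at hle
  exact hle

end L1

section D2

variable {v : K → WithTop Λ} {μ : Polynomial K → WithTop Λ} {φ : Polynomial K}

lemma le_of_add_le_add_right_withtop {a b c : WithTop Λ} (hc : c ≠ ⊤) (h : a + c ≤ b + c) :
    a ≤ b := by
  by_contra hcon
  push_neg at hcon
  exact absurd h (not_le.2 (add_lt_add_right_withtop hc hcon))

lemma deg_div_lt (hφm : φ.Monic) {X : Polynomial K}
    (hXd : X.degree < ((φ.natDegree * 2 : ℕ) : WithBot ℕ)) : (X /ₘ φ).degree < φ.degree := by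
  by_cases hd0 : X /ₘ φ = 0
  · rw [hd0, Polynomial.degree_zero, Polynomial.degree_eq_natDegree hφm.ne_zero]
    exact WithBot.bot_lt_coe _
  · have hX0 : X ≠ 0 := fun h => hd0 (by rw [h, Polynomial.zero_divByMonic])
    have h1 : (X /ₘ φ).natDegree = X.natDegree - φ.natDegree :=
      Polynomial.natDegree_divByMonic X hφm
    have h2 : X.natDegree < φ.natDegree * 2 := by
      have := (Polynomial.degree_eq_natDegree hX0) ▸ hXd
      exact_mod_cast this
    rw [Polynomial.degree_eq_natDegree hd0, Polynomial.degree_eq_natDegree hφm.ne_zero, h1]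
    exact_mod_cast by omega

lemma deg_mul_lt_of_lt_le {X Y : Polynomial K} {a b : ℕ}
    (hX : X.degree < ((a : ℕ) : WithBot ℕ)) (hY : Y.degree ≤ ((b : ℕ) : WithBot ℕ)) :
    (X * Y).degree < ((a + b : ℕ) : WithBot ℕ) := by
  by_cases h0 : X = 0
  · rw [h0, zero_mul, Polynomial.degree_zero]; exact WithBot.bot_lt_coe _
  by_cases h1 : Y = 0
  · rw [h1, mul_zero, Polynomial.degree_zero]; exact WithBot.bot_lt_coe _
  rw [Polynomial.degree_mul, Polynomial.degree_eq_natDegree h0, Polynomial.degree_eq_natDegree h1]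
  rw [Polynomial.degree_eq_natDegree h0] at hX
  rw [Polynomial.degree_eq_natDegree h1] at hY
  have hx : X.natDegree < a := by exact_mod_cast hX
  have hy : Y.natDegree ≤ b := by exact_mod_cast hY
  have : X.natDegree + Y.natDegree < a + b := by omega
  exact_mod_cast this

lemma deg_add_lt {X Y : Polynomial K} {a : ℕ}
    (hX : X.degree < ((a : ℕ) : WithBot ℕ)) (hY : Y.degree < ((a : ℕ) : WithBot ℕ)) :
    (X + Y).degree < ((a : ℕ) : WithBot ℕ) :=
  lt_of_le_of_lt (Polynomial.degree_add_le _ _) (max_lt hX hY)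

lemma deg_sub_lt' {X Y : Polynomial K} {a : ℕ}
    (hX : X.degree < ((a : ℕ) : WithBot ℕ)) (hY : Y.degree < ((a : ℕ) : WithBot ℕ)) :
    (X - Y).degree < ((a : ℕ) : WithBot ℕ) :=
  lt_of_le_of_lt (Polynomial.degree_sub_le _ _) (max_lt hX hY)

lemma deg_lt_mono {X : Polynomial K} {a b : ℕ} (h : X.degree < ((a : ℕ) : WithBot ℕ))
    (hab : a ≤ b) : X.degree < ((b : ℕ) : WithBot ℕ) :=
  lt_of_lt_of_le h (by exact_mod_cast hab)

lemma deg_pow_le (hφm : φ.Monic) (k : ℕ) :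
    (φ ^ k).degree ≤ ((φ.natDegree * k : ℕ) : WithBot ℕ) := by
  rw [Polynomial.degree_pow, Polynomial.degree_eq_natDegree hφm.ne_zero, nsmul_eq_mul]
  push_cast
  rw [mul_comm]

/-- D2: slope equality implies μ-minimality. -/
lemma D2 (hv : IsVal v) (hμ : ExtVal v μ)
    (hsupp : ∀ f : Polynomial K, f ≠ 0 → μ f ≠ ⊤)
    (hφm : φ.Monic) (hmin : MuMinimal μ φ) (hn : 0 < φ.natDegree) (hμφ : μ φ ≠ ⊤)
    (f : Polynomial K) (hf : f.Monic) (hm : 0 < f.natDegree)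
    (heq : φ.natDegree • μ f = f.natDegree • μ φ) : MuMinimal μ f := by
  classical
  intro g hg0 hgdeg hdvd
  obtain ⟨q, hq⟩ := hdvd
  set n := φ.natDegree with hnn
  set m := f.natDegree with hmm
  have hq0 : q ≠ 0 := by
    intro h0; rw [h0, zero_mul, sub_zero] at hq; exact lt_irrefl _ hq
  have hf0 : f ≠ 0 := hf.ne_zero
  have hμf : μ f ≠ ⊤ := hsupp f hf0
  have hμg : μ g ≠ ⊤ := hsupp g hg0
  have hμq : μ q ≠ ⊤ := hsupp q hq0
  have hn1 : n - 1 + 1 = n := Nat.succ_pred_eq_of_pos hn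
  have hm1 : m - 1 + 1 = m := Nat.succ_pred_eq_of_pos hm
  set m' := m - 1 with hm'
  -- F := f ^ n
  set F := f ^ n with hF
  have hFmon : F.Monic := hf.pow n
  have hFne : F ≠ 0 := hFmon.ne_zero
  have hFdeg : F.natDegree = n * m := by rw [hF, Polynomial.natDegree_pow]
  have hμF : μ F = m • μ φ := by
    rw [hF, mu_pow hv hμ]
    exact heq
  have hμFt : μ F ≠ ⊤ := by rw [hμF]; exact nsmul_ne_top hμφ m
  set G := g * f ^ (n - 1) with hG
  have hG0 : G ≠ 0 := mul_ne_zero hg0 (pow_ne_zero _ hf0)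
  have hμG : μ G ≠ ⊤ := hsupp G hG0
  have hfn : f ^ n = f ^ (n - 1) * f := by rw [← pow_succ, hn1]
  have hkey : μ G < μ (G - q * F) := by
    have h1 : G - q * F = (g - q * f) * f ^ (n - 1) := by rw [hG, hF, hfn]; ring
    have h2 : μ G = μ g + μ (f ^ (n - 1)) := by rw [hG, hμ.1]
    have h3 : μ (G - q * F) = μ (g - q * f) + μ (f ^ (n - 1)) := by rw [h1, hμ.1]
    rw [h3, h2]
    exact add_lt_add_right_withtop (by rw [mu_pow hv hμ]; exact nsmul_ne_top hμf _) hq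
  have hgm : g.natDegree < m := Polynomial.natDegree_lt_natDegree hg0 hgdeg
  have hGlt : G.natDegree < n * m := by
    have h1 : G.natDegree = g.natDegree + (n - 1) * m := by
      rw [hG, Polynomial.natDegree_mul hg0 (pow_ne_zero _ hf0), Polynomial.natDegree_pow, ← hmm]
    have h3 : n * m = (n - 1) * m + m := by
      conv_lhs => rw [← hn1]
      ring
    omega
  have hGdeg : G.degree < ((n * m : ℕ) : WithBot ℕ) := by
    rw [Polynomial.degree_eq_natDegree hG0]
    exact_mod_cast hGlt
  -- expansion of F - φ ^ m
  have hFmdeg : (F - φ ^ m).degree < ((n * m : ℕ) : WithBot ℕ) := by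
    by_cases hz : F - φ ^ m = 0
    · rw [hz, Polynomial.degree_zero]; exact WithBot.bot_lt_coe _
    · have hdeg_eq : F.degree = (φ ^ m).degree := by
        rw [hF, Polynomial.degree_pow, Polynomial.degree_pow,
          Polynomial.degree_eq_natDegree hf0, Polynomial.degree_eq_natDegree hφm.ne_zero,
          ← hmm, ← hnn, nsmul_eq_mul, nsmul_eq_mul]
        push_cast
        ring
      have h1 := Polynomial.degree_sub_lt hdeg_eq hFne
        (by rw [hFmon.leadingCoeff, (hφm.pow m).leadingCoeff])
      rw [Polynomial.degree_eq_natDegree hFne, hFdeg] at h1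
      exact h1
  obtain ⟨A, hA, hAsum⟩ := exp_exists hφm hn m _ hFmdeg
  have hFsum : F = ∑ s ∈ range m, A s * φ ^ s + φ ^ m := by
    rw [← hAsum]; ring
  -- extended expansion of F computes μ F; gives term bounds
  set bF : ℕ → Polynomial K := fun s => if s = m then 1 else A s with hbF
  have hbFdeg : ∀ s, (bF s).degree < φ.degree := by
    intro s
    by_cases hs : s = m
    · simp only [hbF, hs, if_true]
      rw [Polynomial.degree_one, Polynomial.degree_eq_natDegree hφm.ne_zero]
      exact_mod_cast hn
    · simp only [hbF, hs, if_false]; exact hA s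
  have hFsum2 : F = ∑ s ∈ range (m + 1), bF s * φ ^ s := by
    rw [Finset.sum_range_succ]
    have h1 : ∑ s ∈ range m, bF s * φ ^ s = ∑ s ∈ range m, A s * φ ^ s := by
      refine Finset.sum_congr rfl fun s hs => ?_
      have : s ≠ m := Nat.ne_of_lt (Finset.mem_range.1 hs)
      simp [hbF, this]
    rw [h1]
    simp only [hbF, if_true]
    rw [hFsum]
    ring
  have hvalF := lemA hv hμ hφm hmin hμφ bF hbFdeg (m + 1)
  rw [← hFsum2] at hvalF
  have hAm_ge : μ φ ≤ μ (A m') := by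
    have h1 : μ F ≤ μ (bF m') + m' • μ φ := by
      rw [hvalF]
      exact Finset.inf_le (Finset.mem_range.2 (by omega))
    have h2 : bF m' = A m' := by
      have : m' ≠ m := by omega
      simp [hbF, this]
    rw [h2, hμF] at h1
    have h3 : m • μ φ = μ φ + m' • μ φ := by
      conv_lhs => rw [← hm1]
      rw [succ_nsmul]
      rw [add_comm]
    rw [h3] at h1
    exact le_of_add_le_add_right_withtop (nsmul_ne_top hμφ m') h1
  -- expansion of q
  set J := q.natDegree + 1 with hJ
  have hqdeg : q.degree < ((n * J : ℕ) : WithBot ℕ) := by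
    rw [Polynomial.degree_eq_natDegree hq0]
    have h1 : q.natDegree < n * J := by
      have h2 : J ≤ n * J := Nat.le_mul_of_pos_left J hn
      omega
    exact_mod_cast h1
  obtain ⟨c, hc, hcsum⟩ := exp_exists hφm hn J q hqdeg
  have hvalQ := lemA hv hμ hφm hmin hμφ c hc J
  rw [← hcsum] at hvalQ
  set Att := (range J).filter (fun j => μ (c j) + j • μ φ = μ q) with hAtt
  have hAttne : Att.Nonempty := by
    obtain ⟨j, hj, hjv⟩ := Finset.exists_mem_eq_inf (range J)
      ⟨0, Finset.mem_range.2 (by omega)⟩ (fun s => μ (c s) + s • μ φ)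
    exact ⟨j, Finset.mem_filter.2 ⟨hj, by rw [← hjv, ← hvalQ]⟩⟩
  set σ := Att.max' hAttne with hσ
  have hσmem : σ ∈ Att := Att.max'_mem hAttne
  have hσval : μ (c σ) + σ • μ φ = μ q := by
    have := (Finset.mem_filter.1 hσmem).2
    exact this
  have hσrange : σ ∈ range J := (Finset.mem_filter.1 hσmem).1
  have hμcσ : μ (c σ) ≠ ⊤ := by
    intro h0
    rw [h0, top_add] at hσval
    exact hμq hσval.symm
  have hcσ0 : c σ ≠ 0 := by
    intro h0
    rw [h0, mu_zero hv hμ] at hμcσ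
    exact hμcσ rfl
  set Qs := ∑ j ∈ Att, c j * φ ^ j with hQs
  have hQbad : μ q < μ (q - Qs) := by
    have hsplit : Qs + ∑ j ∈ (range J).filter (fun j => ¬(μ (c j) + j • μ φ = μ q)),
        c j * φ ^ j = q := by
      rw [hQs, hAtt, Finset.sum_filter_add_sum_filter_not]
      exact hcsum.symm
    have h1 : q - Qs = ∑ j ∈ (range J).filter (fun j => ¬(μ (c j) + j • μ φ = μ q)),
        c j * φ ^ j := by
      linear_combination -hsplit
    rw [h1]
    refine lt_of_lt_of_le ?_ (mu_sum_ge hv hμ _ _)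
    rw [Finset.lt_inf_iff (lt_top_iff_ne_top.2 hμq)]
    intro j hj
    obtain ⟨hjr, hjne⟩ := Finset.mem_filter.1 hj
    rw [hμ.1, mu_pow hv hμ]
    refine lt_of_le_of_ne ?_ ?_
    · rw [hvalQ]; exact Finset.inf_le hjr
    · intro hcontra
      exact hjne hcontra.symm
  have hμQs : μ Qs = μ q := mu_eq_of_sub_lt hv hμ hQbad
  have hμqF : μ (q * F) = μ G := mu_eq_of_sub_lt hv hμ hkey
  have hkey' : μ G < μ (G - Qs * F) := by
    have hid : G - Qs * F = (G - q * F) + (q - Qs) * F := by ring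
    rw [hid]
    have h2 : μ G < μ ((q - Qs) * F) := by
      have h3 : μ ((q - Qs) * F) = μ (q - Qs) + μ F := hμ.1 _ _
      have h4 : μ G = μ q + μ F := by rw [← hμqF]; exact hμ.1 q F
      rw [h3, h4]
      exact add_lt_add_right_withtop hμFt hQbad
    calc μ G < min (μ (G - q * F)) (μ ((q - Qs) * F)) := lt_min hkey h2
      _ ≤ _ := hμ.2.1 _ _
  have hμQsF : μ (Qs * F) = μ G := mu_eq_of_sub_lt hv hμ hkey'
  -- decomposition
  set E0 := (c σ * A m') %ₘ φ with hE0
  set E1 := (c σ * A m') /ₘ φ with hE1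
  set Cc := c σ + E1 with hCc
  set Qt := ∑ j ∈ Att.erase σ, c j * φ ^ j with hQt
  set At := ∑ s ∈ range m', A s * φ ^ s with hAt
  have hQsdecomp : Qs = Qt + c σ * φ ^ σ := by
    have h1 := Finset.sum_erase_add Att (fun j => c j * φ ^ j) hσmem
    rw [hQs, hQt]
    linear_combination -h1
  have hFdecomp : F = At + A m' * φ ^ m' + φ ^ m := by
    rw [hFsum, hAt]
    conv_lhs => rw [← hm1, Finset.sum_range_succ]
    rw [hm1]
  have hE : c σ * A m' = E0 + φ * E1 := (Polynomial.modByMonic_add_div _ φ).symm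
  set R := E0 * φ ^ (σ + m') + (c σ * At) * φ ^ σ + Qt * F with hR
  have hQsF : Qs * F = Cc * φ ^ (σ + m) + R := by
    rw [hR, hCc]
    calc Qs * F = Qt * F + c σ * φ ^ σ * F := by rw [hQsdecomp]; ring
      _ = Qt * F + c σ * φ ^ σ * (At + A m' * φ ^ m' + φ ^ m) := by rw [← hFdecomp]
      _ = Qt * F + (c σ * At) * φ ^ σ + (c σ * A m') * (φ ^ σ * φ ^ m') +
            c σ * (φ ^ σ * φ ^ m) := by ring
      _ = _ := by
        rw [hE]
        rw [← pow_add, ← pow_add]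
        conv_lhs => rw [← hm1]
        rw [show σ + (m' + 1) = σ + m' + 1 by omega]
        rw [show (σ + m) = σ + m' + 1 by omega]
        rw [pow_succ]
        ring
  -- degree bounds
  have hφdeg_nat : φ.degree = (n : WithBot ℕ) := by
    rw [Polynomial.degree_eq_natDegree hφm.ne_zero]
  have hE0deg : E0.degree < ((n : ℕ) : WithBot ℕ) := by
    rw [hE0, ← hφdeg_nat]
    exact Polynomial.degree_modByMonic_lt _ hφm
  have hcσAm : (c σ * A m').degree < ((n * 2 : ℕ) : WithBot ℕ) := deg_mul_lt_two hφm (hc σ) (hA m')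
  have hE1deg : E1.degree < φ.degree := deg_div_lt hφm hcσAm
  have hRdeg : R.degree < ((n * (σ + m) : ℕ) : WithBot ℕ) := by
    rw [hR]
    refine deg_add_lt (deg_add_lt ?_ ?_) ?_
    · have h1 : (E0 * φ ^ (σ + m')).degree < ((n + n * (σ + m') : ℕ) : WithBot ℕ) :=
        deg_mul_lt_of_lt_le hE0deg (by rw [mul_comm] at *; exact deg_pow_le hφm (σ + m') |>.trans (by rw [Nat.mul_comm]))
      refine deg_lt_mono h1 (by
        have h5 : n * (σ + m) = n * (σ + m') + n := by rw [← hm1]; ring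
        omega)
    · have hAtdeg : At.degree < ((n * m' : ℕ) : WithBot ℕ) := by
        rw [hAt]
        exact exp_deg_lt hφm hn A hA (range m') m' (fun s hs => Finset.mem_range.1 hs)
      have h2 : (c σ * At).degree < ((n + n * m' : ℕ) : WithBot ℕ) := by
        refine deg_mul_lt_of_lt_le ?_ ?_
        · rw [← hφdeg_nat]; exact hc σ
        · exact le_of_lt hAtdeg
      have h3 : ((c σ * At) * φ ^ σ).degree < ((n + n * m' + n * σ : ℕ) : WithBot ℕ) :=
        deg_mul_lt_of_lt_le h2 (by rw [mul_comm] at *; exact (deg_pow_le hφm σ).trans (by rw [Nat.mul_comm]))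
      refine deg_lt_mono h3 (by
        have h5 : n * (σ + m) = n * (σ + m') + n := by rw [← hm1]; ring
        have h6 : n * (σ + m') = n * σ + n * m' := by ring
        omega)
    · have hQtdeg : Qt.degree < ((n * σ : ℕ) : WithBot ℕ) := by
        rw [hQt]
        refine exp_deg_lt hφm hn c hc (Att.erase σ) σ (fun j hj => ?_)
        obtain ⟨hne, hmem⟩ := Finset.mem_erase.1 hj
        exact lt_of_le_of_ne (Finset.le_max' Att j hmem) hne
      have h4 : (Qt * F).degree < ((n * σ + n * m : ℕ) : WithBot ℕ) := by
        refine deg_mul_lt_of_lt_le hQtdeg ?_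
        rw [Polynomial.degree_eq_natDegree hFne, hFdeg]
      exact deg_lt_mono h4 (le_of_eq (Nat.mul_add n σ m).symm)
  have hGRdeg : (G - R).degree < ((n * (σ + m) : ℕ) : WithBot ℕ) :=
    deg_sub_lt' (deg_lt_mono hGdeg (by
      have h5 : n * (σ + m) = n * σ + n * m := Nat.mul_add n σ m
      omega)) hRdeg
  obtain ⟨w, hwdeg, hwsum⟩ := exp_exists hφm hn (σ + m) (G - R) hGRdeg
  set bb : ℕ → Polynomial K := fun t => if t = σ + m then -Cc else w t with hbb
  have hCcdeg : Cc.degree < φ.degree := by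
    rw [hCc]
    refine lt_of_le_of_lt (Polynomial.degree_add_le _ _) (max_lt (hc σ) hE1deg)
  have hbbdeg : ∀ t, (bb t).degree < φ.degree := by
    intro t
    by_cases ht : t = σ + m
    · simp only [hbb, ht, if_true]
      rw [Polynomial.degree_neg]
      exact hCcdeg
    · simp only [hbb, ht, if_false]; exact hwdeg t
  have hsum2 : G - Qs * F = ∑ t ∈ range (σ + m + 1), bb t * φ ^ t := by
    rw [Finset.sum_range_succ]
    have h1 : ∑ t ∈ range (σ + m), bb t * φ ^ t = ∑ t ∈ range (σ + m), w t * φ ^ t := by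
      refine Finset.sum_congr rfl fun t ht => ?_
      have : t ≠ σ + m := Nat.ne_of_lt (Finset.mem_range.1 ht)
      simp [hbb, this]
    rw [h1, ← hwsum]
    simp only [hbb, if_true]
    rw [hQsF]
    ring
  have hvfinal := lemA hv hμ hφm hmin hμφ bb hbbdeg (σ + m + 1)
  rw [← hsum2] at hvfinal
  have hle : μ (G - Qs * F) ≤ μ Cc + (σ + m) • μ φ := by
    rw [hvfinal]
    have h2 : μ (bb (σ + m)) = μ Cc := by
      have h3 : bb (σ + m) = -Cc := by simp [hbb]
      rw [h3, mu_neg hv hμ]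
    calc (range (σ + m + 1)).inf (fun t => μ (bb t) + t • μ φ)
        ≤ μ (bb (σ + m)) + (σ + m) • μ φ :=
          Finset.inf_le (Finset.mem_range.2 (Nat.lt_succ_self _))
      _ = μ Cc + (σ + m) • μ φ := by rw [h2]
  -- alive: μ Cc = μ (c σ)
  have halive : μ Cc = μ (c σ) := by
    rcases eq_or_lt_of_le hAm_ge with hcase | hcase
    · -- μ (A m') = μ φ : ATOM
      exact atom hv hμ hsupp hφm hmin hn hμφ (A m') (hA m') hcase.symm (c σ) hcσ0 (hc σ)
    · -- μ (A m') > μ φ: carry is dead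
      have h1 : μ (c σ) < μ E1 := by
        have h3 : μ (c σ) + μ φ < μ (c σ) + μ (A m') :=
          WithTop.add_lt_add_left hμcσ hcase
        have h4 : μ (c σ) + μ φ < μ E1 + μ φ := lt_of_lt_of_le h3 (by
          calc μ (c σ) + μ (A m') = μ (c σ * A m') := (hμ.1 _ _).symm
            _ ≤ μ E1 + μ φ := by
              rw [hE1]
              exact mu_div_ge hv hμ hφm hmin hn hμφ _ hcσAm)
        exact lt_of_add_lt_add_right_withtop h4
      rw [hCc]
      exact mu_add_eq_left hv hμ h1
  -- final contradiction
  have hfinalval : μ Cc + (σ + m) • μ φ = μ G := by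
    rw [halive, ← hμQsF, hμ.1, hμQs, hμF, ← hσval, add_nsmul, add_assoc]
  rw [hfinalval] at hle
  exact absurd (lt_of_lt_of_le hkey' hle) (lt_irrefl _)

end D2

/-- for a key polynomial `φ` and a monic non-constant `f`,
`μ(f)/deg f ≤ μ(φ)/deg φ`, interpreted as `deg(φ)·μ(f) ≤ deg(f)·μ(φ)`,
with equality iff `f` is μ-minimal. -/
theorem value_degree_bound (v : K → WithTop Λ) (μ : Polynomial K → WithTop Λ)
    (hv : IsVal v) (hμ : ExtVal v μ)
    (hsupp : ∀ f : Polynomial K, f ≠ 0 → μ f ≠ ⊤)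
    (φ : Polynomial K) (hφ : KeyPoly μ φ)
    (f : Polynomial K) (hf : f.Monic) (hdeg : 0 < f.degree) :
    φ.natDegree • μ f ≤ f.natDegree • μ φ ∧
      (φ.natDegree • μ f = f.natDegree • μ φ ↔ MuMinimal μ f) := by
  have hφm : φ.Monic := hφ.1
  have hφmin : MuMinimal μ φ := hφ.2.1
  have hμφt : μ φ ≠ ⊤ := hφ.2.2.1
  have hnd1 : ¬ MuDvd μ φ 1 := hφ.2.2.2.1
  have hm : 0 < f.natDegree := Polynomial.natDegree_pos_iff_degree_pos.2 hdeg
  have hf0 : f ≠ 0 := hf.ne_zero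
  have hμf : μ f ≠ ⊤ := hsupp f hf0
  have hn : 0 < φ.natDegree := by
    by_contra hc
    push_neg at hc
    have h0 : φ.natDegree = 0 := Nat.le_zero.1 hc
    have hφ1 : φ = 1 := hφm.natDegree_eq_zero.1 h0
    refine hnd1 ⟨1, ?_⟩
    rw [hφ1, mul_one, sub_self, mu_zero hv hμ, mu_one hv hμ]
    exact lt_top_iff_ne_top.2 (by simp)
  have hineq : φ.natDegree • μ f ≤ f.natDegree • μ φ :=
    L1 hv hμ hφm hφmin hn hμφt f hf
  refine ⟨hineq, ?_, ?_⟩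
  · intro heq
    exact D2 hv hμ hsupp hφm hφmin hn hμφt f hf hm heq
  · intro hfmin
    refine le_antisymm hineq ?_
    exact L1 hv hμ hf hfmin hm hμf φ hφm
end

section
/- Let μ' = [μ; φ, γ] be an augmented valuation. Then μ(f) ≤ μ'(f) for all f ∈ K[x], and for nonzero f, μ(f) = μ'(f) holds if and only if φ does not μ-divide f (i.e. there is no q ∈ K[x] with μ(f − qφ·h) > μ(f) exhibiting in_μ φ | in_μ f). -/
open Polynomial Finset

variable {K : Type*} [Field K] {Λ : Type*} [AddCommGroup Λ] [LinearOrder Λ] [IsOrderedAddMonoid Λ]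

section Aux

variable {v : K → WithTop Λ} {μ : Polynomial K → WithTop Λ}

lemma aux_mu_zero (hv : IsVal v) (hμ : ExtVal v μ) : μ (0 : Polynomial K) = ⊤ := by
  have h := hμ.2.2 0
  rw [map_zero] at h
  rw [h, (hv.1 0).2 rfl]

lemma aux_mu_one (hv : IsVal v) (hμ : ExtVal v μ) : μ (1 : Polynomial K) = 0 := by
  have h := hμ.2.2 1
  rw [map_one] at h
  rw [h, hv.2.1]

lemma aux_v_neg_one (hv : IsVal v) : v (-1 : K) = 0 := by
  have h := hv.2.2.1 (-1 : K) (-1)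
  rw [neg_mul_neg, one_mul, hv.2.1] at h
  have h1 : v (-1 : K) ≠ ⊤ := by
    intro ht
    rw [ht, top_add] at h
    exact absurd h (by simp)
  lift (v (-1 : K)) to Λ using h1 with w hw
  have hw2 : w + w = 0 := by exact_mod_cast h.symm
  have hw0 : w = 0 := by
    rcases lt_trichotomy w 0 with hlt | heq | hgt
    · exact absurd hw2 (ne_of_lt (by simpa using add_lt_add hlt hlt))
    · exact heq
    · exact absurd hw2 (ne_of_gt (by simpa using add_lt_add hgt hgt))
  rw [hw0]
  rfl

lemma aux_mu_neg (hv : IsVal v) (hμ : ExtVal v μ) (f : Polynomial K) : μ (-f) = μ f := by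
  have h : (-f : Polynomial K) = Polynomial.C (-1) * f := by ring_nf; simp
  rw [h, hμ.1, hμ.2.2, aux_v_neg_one hv, zero_add]

lemma aux_mu_pow (hv : IsVal v) (hμ : ExtVal v μ) (φ : Polynomial K) (s : ℕ) :
    μ (φ ^ s) = s • μ φ := by
  induction s with
  | zero => rw [pow_zero, zero_nsmul, aux_mu_one hv hμ]
  | succ n ih => rw [pow_succ, hμ.1, ih, succ_nsmul]

/-- unequal-values lemma -/
lemma aux_mu_add_ne (hv : IsVal v) (hμ : ExtVal v μ) {f g : Polynomial K}
    (h : μ g < μ f) : μ (f + g) = μ g := by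
  apply le_antisymm
  · by_contra hc
    push_neg at hc
    have h2 : μ g = μ ((f + g) + (-f)) := by congr 1; ring
    have h3 : min (μ (f + g)) (μ (-f)) ≤ μ ((f + g) + (-f)) := hμ.2.1 _ _
    rw [aux_mu_neg hv hμ, ← h2] at h3
    exact absurd (lt_of_lt_of_le (lt_min hc h) h3) (lt_irrefl _)
  · calc μ g = min (μ f) (μ g) := (min_eq_right h.le).symm
      _ ≤ μ (f + g) := hμ.2.1 f g

lemma aux_nsmul_ne_top {a : WithTop Λ} (ha : a ≠ ⊤) (n : ℕ) : n • a ≠ ⊤ := by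
  induction n with
  | zero => simp
  | succ m ih => rw [succ_nsmul]; exact WithTop.add_ne_top.mpr ⟨ih, ha⟩

lemma aux_add_finset_inf (c : WithTop Λ) (s : Finset ℕ) (F : ℕ → WithTop Λ) :
    c + s.inf F = s.inf fun x => c + F x := by
  induction s using Finset.induction with
  | empty => simp
  | insert _ _ hni ih =>
    rw [Finset.inf_insert, Finset.inf_insert, ← ih]
    exact (min_add_add_left c _ _).symm

lemma aux_inf_range_succ' (F : ℕ → WithTop Λ) (n : ℕ) :
    (range (n+1)).inf F = min (F 0) ((range n).inf fun s => F (s+1)) := by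
  induction n with
  | zero => simp
  | succ m ih =>
    rw [Finset.range_add_one, Finset.inf_insert, ih, Finset.range_add_one, Finset.inf_insert]
    exact inf_left_comm _ _ _

end Aux

section Key

variable {v : K → WithTop Λ} {μ : Polynomial K → WithTop Λ} {φ : Polynomial K}

/-- key minimality lemma: μ(a + φ g) = min (μ a) (μ (φ g)) for deg a < deg φ. -/
lemma aux_key_min (hv : IsVal v) (hμ : ExtVal v μ) (hsupp : ∀ f : Polynomial K, f ≠ 0 → μ f ≠ ⊤)
    (hmin : MuMinimal μ φ) {a : Polynomial K} (ha : a.degree < φ.degree) (g : Polynomial K) :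
    μ (a + φ * g) = min (μ a) (μ (φ * g)) := by
  rcases eq_or_ne a 0 with rfl | ha0
  · rw [aux_mu_zero hv hμ]; simp
  · rcases lt_trichotomy (μ a) (μ (φ * g)) with hlt | heq | hgt
    · rw [min_eq_left (le_of_lt hlt), add_comm]
      exact aux_mu_add_ne hv hμ hlt
    · rw [← heq, min_self]
      apply le_antisymm
      · by_contra hc
        push_neg at hc
        exact hmin a ha0 ha ⟨-g, by rw [show a - -g * φ = a + φ * g by ring]; exact hc⟩
      · refine le_trans (le_min (le_refl _) (heq ▸ le_refl _)) (hμ.2.1 a (φ * g))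
    · rw [min_eq_right (le_of_lt hgt)]
      exact aux_mu_add_ne hv hμ hgt

/-- Theorem A: value of a φ-expansion. -/
lemma aux_expansion_val (hv : IsVal v) (hμ : ExtVal v μ)
    (hsupp : ∀ f : Polynomial K, f ≠ 0 → μ f ≠ ⊤) (hmin : MuMinimal μ φ)
    (n : ℕ) (a : ℕ → Polynomial K) (ha : ∀ s, (a s).degree < φ.degree) :
    μ (∑ s ∈ range n, a s * φ ^ s) = (range n).inf fun s => μ (a s) + s • μ φ := by
  induction n generalizing a with
  | zero => simpa using aux_mu_zero hv hμ
  | succ m ih =>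
    have hsum : ∑ s ∈ range (m+1), a s * φ ^ s
        = a 0 + φ * ∑ s ∈ range m, a (s+1) * φ ^ s := by
      rw [Finset.sum_range_succ' (fun s => a s * φ ^ s) m, Finset.mul_sum,
        pow_zero, mul_one, add_comm]
      congr 1
      apply Finset.sum_congr rfl
      intro x _
      rw [pow_succ]; ring
    rw [hsum, aux_key_min hv hμ hsupp hmin (ha 0), hμ.1,
      ih (fun s => a (s+1)) (fun s => ha (s+1)),
      aux_add_finset_inf, aux_inf_range_succ']
    congr 1
    · simp
    · refine Finset.inf_congr rfl ?_
      intro x _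
      rw [succ_nsmul, add_comm (μ φ), add_assoc]

/-- existence of φ-expansions -/
lemma aux_exists_expansion (hm : φ.Monic) (hd : 0 < φ.degree) :
    ∀ (N : ℕ) (f : Polynomial K), f.natDegree ≤ N →
      ∃ (n : ℕ) (a : ℕ → Polynomial K), (∀ s, (a s).degree < φ.degree) ∧
        f = ∑ s ∈ range n, a s * φ ^ s := by
  intro N
  induction N with
  | zero =>
    intro f hf
    refine ⟨1, fun s => if s = 0 then f else 0, ?_, ?_⟩
    · intro s
      by_cases hs : s = 0
      · simp only [hs, if_pos rfl]
        calc f.degree ≤ (f.natDegree : WithBot ℕ) := degree_le_natDegree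
          _ ≤ (0 : ℕ) := by exact_mod_cast hf
          _ < φ.degree := hd
      · simp [hs, lt_of_le_of_lt bot_le hd]
    · simp
  | succ N ihN =>
    intro f hf
    by_cases hdf : f.degree < φ.degree
    · refine ⟨1, fun s => if s = 0 then f else 0, ?_, ?_⟩
      · intro s
        by_cases hs : s = 0
        · simpa [hs] using hdf
        · simp [hs, lt_of_le_of_lt bot_le hd]
      · simp
    · push_neg at hdf
      have hf0 : f ≠ 0 := by
        intro h
        rw [h, degree_zero] at hdf
        exact absurd (lt_of_lt_of_le hd hdf) (by simp)
      have hdg : (f /ₘ φ).degree < f.degree := degree_divByMonic_lt f φ hf0 hd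
      have hgN : (f /ₘ φ).natDegree ≤ N := by
        rcases eq_or_ne (f /ₘ φ) 0 with h0 | h0
        · simp [h0]
        · have := natDegree_lt_natDegree h0 hdg
          omega
      obtain ⟨n, b, hb, hbe⟩ := ihN (f /ₘ φ) hgN
      refine ⟨n + 1, fun s => if s = 0 then f %ₘ φ else b (s - 1), ?_, ?_⟩
      · intro s
        by_cases hs : s = 0
        · simpa [hs] using degree_modByMonic_lt f hm
        · simpa [hs] using hb (s - 1)
      · rw [Finset.sum_range_succ' (fun s => (if s = 0 then f %ₘ φ else b (s-1)) * φ ^ s) n]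
        have hstep : ∑ x ∈ range n, (if x + 1 = 0 then f %ₘ φ else b (x+1-1)) * φ ^ (x+1)
            = φ * ∑ x ∈ range n, b x * φ ^ x := by
          rw [Finset.mul_sum]
          apply Finset.sum_congr rfl
          intro x _
          rw [if_neg (Nat.succ_ne_zero x), Nat.add_sub_cancel, pow_succ]
          ring
        rw [hstep, ← hbe, if_pos rfl, pow_zero, mul_one]
        conv_lhs => rw [← modByMonic_add_div f φ]
        ring
end Key

/-- for `μ' = [μ; φ, γ]` we have `μ ≤ μ'`, and for nonzero `f`,
`μ(f) = μ'(f)` iff `φ` does not μ-divide `f`. -/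
theorem augmentation_ge_and_equality (v : K → WithTop Λ) (μ : Polynomial K → WithTop Λ)
    (hv : IsVal v) (hμ : ExtVal v μ)
    (hsupp : ∀ f : Polynomial K, f ≠ 0 → μ f ≠ ⊤)
    (φ : Polynomial K) (hφ : KeyPoly μ φ)
    (γ : WithTop Λ) (hγ : μ φ < γ)
    (μ' : Polynomial K → WithTop Λ) (haug : AugVal μ φ γ μ') :
    (∀ f : Polynomial K, μ f ≤ μ' f) ∧
      (∀ f : Polynomial K, f ≠ 0 → (μ f = μ' f ↔ ¬ MuDvd μ φ f)) := by
  obtain ⟨hmon, hmin, hφtop, hφ1, _⟩ := hφ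
  -- φ has positive degree
  have hd : 0 < φ.degree := by
    by_contra hc
    push_neg at hc
    have : φ.natDegree = 0 := by
      rcases eq_or_ne φ 0 with h0 | h0
      · simp [h0]
      · have := (degree_le_zero_iff).mp hc
        rw [this]; simp
    have hφeq : φ = 1 := Polynomial.Monic.natDegree_eq_zero hmon |>.mp this
    apply hφ1
    refine ⟨1, ?_⟩
    rw [hφeq]
    simp only [one_mul, sub_self]
    rw [aux_mu_zero hv hμ, aux_mu_one hv hμ]
    exact lt_of_le_of_ne le_top (by simp)
  -- main inequality for arbitrary f with a chosen expansion
  have key : ∀ f : Polynomial K, μ f ≤ μ' f := by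
    intro f
    obtain ⟨n, a, ha, he⟩ := aux_exists_expansion hmon hd f.natDegree f le_rfl
    rw [haug f n a ha he, he, aux_expansion_val hv hμ hsupp hmin n a ha]
    apply Finset.inf_mono_fun
    intro s _
    exact add_le_add_right (nsmul_le_nsmul_right (le_of_lt hγ) s) _
  refine ⟨key, ?_⟩
  intro f hf0
  obtain ⟨n, a, ha, he⟩ := aux_exists_expansion hmon hd f.natDegree f le_rfl
  have hμf : μ f = (range n).inf fun s => μ (a s) + s • μ φ := by
    rw [he]; exact aux_expansion_val hv hμ hsupp hmin n a ha
  have hμ'f : μ' f = (range n).inf fun s => μ (a s) + s • γ := haug f n a ha he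
  have hftop : μ f ≠ ⊤ := hsupp f hf0
  -- n ≥ 1
  obtain ⟨m, rfl⟩ : ∃ m, n = m + 1 := by
    rcases n with _ | m
    · exfalso; apply hf0; simpa using he
    · exact ⟨m, rfl⟩
  set g : Polynomial K := ∑ s ∈ range m, a (s+1) * φ ^ s with hgdef
  have hfag : f = a 0 + φ * g := by
    rw [he, Finset.sum_range_succ' (fun s => a s * φ ^ s) m]
    simp only [pow_zero, mul_one]
    rw [hgdef, Finset.mul_sum]
    rw [add_comm]
    congr 1
    apply Finset.sum_congr rfl
    intro x _
    rw [pow_succ]; ring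
  have hfa0 : f - g * φ = a 0 := by rw [hfag]; ring
  -- μ f ≤ μ (a 0)
  have hle0 : μ f ≤ μ (a 0) := by
    rw [hμf]
    have := Finset.inf_le (f := fun s => μ (a s) + s • μ φ) (Finset.mem_range.mpr (Nat.succ_pos m))
    simpa using this
  -- Claim 2: MuDvd ↔ μ (a 0) ≠ μ f
  have claim2 : MuDvd μ φ f ↔ μ f < μ (a 0) := by
    constructor
    · rintro ⟨q, hq⟩
      rcases lt_or_eq_of_le hle0 with h | h
      · exact h
      · exfalso
        have ha00 : a 0 ≠ 0 := by
          intro h0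
          rw [h0, aux_mu_zero hv hμ] at h
          exact hftop h
        refine hmin (a 0) ha00 (ha 0) ⟨q - g, ?_⟩
        have : a 0 - (q - g) * φ = f - q * φ := by rw [← hfa0]; ring
        rw [this, ← h]
        exact hq
    · intro h
      exact ⟨g, by rw [hfa0]; exact h⟩
  -- Claim 1: μ f = μ' f ↔ μ (a 0) = μ f
  have claim1 : μ f = μ' f ↔ ¬ μ f < μ (a 0) := by
    constructor
    · intro h hlt
      -- show μ f < μ' f, contradiction
      have hterm : ∀ s ∈ range (m+1), μ f < μ (a s) + s • γ := by
        intro s hsm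
        rcases eq_or_ne s 0 with rfl | hs
        · simpa using hlt
        · rcases eq_or_ne (μ (a s)) ⊤ with htop | htop
          · rw [htop, top_add]
            exact lt_of_le_of_ne le_top hftop
          · have h1 : μ f ≤ μ (a s) + s • μ φ := by
              rw [hμf]
              exact Finset.inf_le hsm
            obtain ⟨t, rfl⟩ : ∃ t, s = t + 1 := ⟨s - 1, by omega⟩
            have h2 : μ (a (t+1)) + (t+1) • μ φ < μ (a (t+1)) + (t+1) • γ := by
              rw [succ_nsmul, succ_nsmul]
              have hne : μ (a (t+1)) + t • μ φ ≠ ⊤ :=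
                WithTop.add_ne_top.mpr ⟨htop, aux_nsmul_ne_top hφtop t⟩
              calc μ (a (t+1)) + (t • μ φ + μ φ)
                  = (μ (a (t+1)) + t • μ φ) + μ φ := by rw [add_assoc]
                _ < (μ (a (t+1)) + t • μ φ) + γ := WithTop.add_lt_add_left hne hγ
                _ ≤ (μ (a (t+1)) + t • γ) + γ := by
                    exact add_le_add_left (add_le_add_right (nsmul_le_nsmul_right (le_of_lt hγ) t) _) γ
                _ = μ (a (t+1)) + (t • γ + γ) := by rw [add_assoc]
            exact lt_of_le_of_lt h1 h2
      obtain ⟨s₀, hs₀, hinf⟩ := Finset.exists_mem_eq_inf (range (m+1))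
        (Finset.nonempty_range_iff.mpr (Nat.succ_ne_zero m)) (fun s => μ (a s) + s • γ)
      have : μ f < μ' f := by
        rw [hμ'f, hinf]
        exact hterm s₀ hs₀
      rw [h] at this
      exact absurd this (lt_irrefl _)
    · intro h
      have heq0 : μ (a 0) = μ f := le_antisymm (not_lt.mp h) hle0
      apply le_antisymm (key f)
      rw [hμ'f, ← heq0]
      have := Finset.inf_le (f := fun s => μ (a s) + s • γ) (Finset.mem_range.mpr (Nat.succ_pos m))
      simpa using this
  rw [claim1, claim2]
end

section
/- Let μ : K[x] → Λ∞ be a valuation extending v on K. Then the set of Λ∞-valued valuations ρ on K[x] extending v with ρ < μ (i.e. ρ(f) ≤ μ(f) for all f and ρ ≠ μ) is totally ordered by the pointwise order. -/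
open Polynomial Finset

variable {K : Type*} [Field K] {Λ : Type*} [AddCommGroup Λ] [LinearOrder Λ] [IsOrderedAddMonoid Λ]

/-! ### Auxiliary lemmas -/

private lemma wt_add_lt {a a' b b' : WithTop Λ}
    (ha : a < a') (hb : b ≤ b') (hbt : b ≠ ⊤) : a + b < a' + b' := by
  lift a to Λ using ne_top_of_lt ha
  lift b to Λ using hbt
  rcases eq_or_ne a' ⊤ with h | h
  · simp [h, ← WithTop.coe_add]
  · lift a' to Λ using h
    rcases eq_or_ne b' ⊤ with h2 | h2
    · simp [h2, ← WithTop.coe_add]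
    · lift b' to Λ using h2
      rw [← WithTop.coe_add, ← WithTop.coe_add, WithTop.coe_lt_coe]
      exact add_lt_add_of_lt_of_le (WithTop.coe_lt_coe.1 ha) (WithTop.coe_le_coe.1 hb)

variable {v : K → WithTop Λ} {μ ρ ρ' : Polynomial K → WithTop Λ}

private lemma ev_zero (hv : IsVal v) (h : ExtVal v ρ) : ρ 0 = ⊤ := by
  have := h.2.2 0
  rw [map_zero] at this
  rw [this, (hv.1 0).2 rfl]

private lemma ev_one (hv : IsVal v) (h : ExtVal v ρ) : ρ 1 = 0 := by
  have := h.2.2 1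
  rw [map_one] at this
  rw [this, hv.2.1]

private lemma ev_neg (hv : IsVal v) (h : ExtVal v ρ) (f : Polynomial K) : ρ (-f) = ρ f := by
  have hm : v (-1 : K) = 0 := by
    have h2 : v ((-1 : K) * (-1)) = v (-1) + v (-1) := hv.2.2.1 _ _
    rw [neg_one_mul, neg_neg, hv.2.1] at h2
    rcases eq_or_ne (v (-1 : K)) ⊤ with ht | ht
    · rw [ht] at h2; simp at h2
    · lift (v (-1 : K)) to Λ using ht with a ha
      rw [← WithTop.coe_add, ← WithTop.coe_zero, WithTop.coe_eq_coe] at h2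
      rw [← WithTop.coe_zero, WithTop.coe_eq_coe]
      replace h2 := h2.symm
      rcases lt_trichotomy a 0 with h1 | h1 | h1
      · exact absurd h2 (by rw [← zero_add (0:Λ)]; exact ne_of_lt (add_lt_add h1 h1))
      · exact h1
      · exact absurd h2 (by rw [← zero_add (0:Λ)]; exact ne_of_gt (add_lt_add h1 h1))
  calc ρ (-f) = ρ (Polynomial.C (-1) * f) := by rw [map_neg, map_one, neg_one_mul]
    _ = v (-1) + ρ f := by rw [h.1, h.2.2]
    _ = ρ f := by rw [hm, zero_add]

private lemma ev_sub (hv : IsVal v) (h : ExtVal v ρ) (f g : Polynomial K) :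
    min (ρ f) (ρ g) ≤ ρ (f - g) := by
  have := h.2.1 f (-g)
  rwa [ev_neg hv h g, ← sub_eq_add_neg] at this

/-- The key comparison lemma: if `ρ` agrees with `μ` below degree `m`, `φ` is monic of
degree `m` with `ρ φ < μ φ`, `ρ'` also agrees with `μ` below degree `m`, and
`ρ φ ≤ ρ' φ`, then `ρ ≤ ρ'` everywhere. -/
private lemma main_lemma (hv : IsVal v) (hμ : ExtVal v μ)
    (hρ : ExtVal v ρ) (hρμ : ∀ f, ρ f ≤ μ f) (hρ' : ExtVal v ρ')
    {m : ℕ} (Hm : ∀ g : Polynomial K, g.degree < (m : WithBot ℕ) → ρ g = μ g)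
    (Hm' : ∀ g : Polynomial K, g.degree < (m : WithBot ℕ) → ρ' g = μ g)
    {φ : Polynomial K} (hmon : φ.Monic) (hdeg : φ.natDegree = m)
    (hφ : ρ φ < μ φ) (hφ' : ρ φ ≤ ρ' φ) :
    ∀ g, ρ g ≤ ρ' g := by
  have hm1 : 1 ≤ m := by
    by_contra hm
    push_neg at hm
    interval_cases m
    have : φ = 1 := (hmon.natDegree_eq_zero).1 hdeg
    rw [this, ev_one hv hρ, ev_one hv hμ] at hφ
    exact lt_irrefl _ hφ
  have hφdeg : φ.degree = (m : WithBot ℕ) := by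
    rw [degree_eq_natDegree hmon.ne_zero, hdeg]
  -- strong induction on the natDegree
  suffices H : ∀ n : ℕ, ∀ g : Polynomial K, g.natDegree ≤ n → ρ g ≤ ρ' g by
    intro g; exact H g.natDegree g le_rfl
  intro n
  induction n with
  | zero =>
    intro g hg
    have hdg : g.degree < (m : WithBot ℕ) := by
      calc g.degree ≤ (g.natDegree : WithBot ℕ) := degree_le_natDegree
        _ < (m : WithBot ℕ) := by
            rw [Nat.le_zero.1 hg]
            exact_mod_cast hm1
    rw [Hm g hdg, Hm' g hdg]
  | succ n ih =>
    intro g hg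
    by_cases hlt : g.degree < (m : WithBot ℕ)
    · rw [Hm g hlt, Hm' g hlt]
    · -- divide: g = r + φ * q
      set r := g %ₘ φ with hr
      set q := g /ₘ φ with hq
      have heq : r + φ * q = g := modByMonic_add_div g φ
      have hrdeg : r.degree < (m : WithBot ℕ) := by
        rw [← hφdeg]; exact degree_modByMonic_lt g hmon
      have hqdeg : q.natDegree ≤ n := by
        rw [hq, natDegree_divByMonic g hmon, hdeg]
        omega
      -- values of the pieces
      have hρφq : ρ (φ * q) = ρ φ + ρ q := hρ.1 φ q
      have hρ'φq : ρ' (φ * q) = ρ' φ + ρ' q := hρ'.1 φ q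
      -- Key step: ρ g ≤ min (ρ r) (ρ φ + ρ q)
      have key : ρ g ≤ min (ρ r) (ρ φ + ρ q) := by
        rcases lt_trichotomy (ρ r) (ρ φ + ρ q) with hAB | hAB | hAB
        · -- ρ r < ρ (φ q) : then ρ g ≤ ρ r
          have h1 : min (ρ g) (ρ (φ * q)) ≤ ρ r := by
            have := ev_sub hv hρ g (φ * q)
            have hgr : g - φ * q = r := by rw [← heq]; ring
            rwa [hgr] at this
          rw [hρφq] at h1
          rcases min_le_iff.1 h1 with h2 | h2
          · exact le_min (h2) (le_of_lt (lt_of_le_of_lt h2 hAB))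
          · exact absurd h2 (not_le.2 hAB)
        · -- equal values
          rcases eq_or_ne (ρ r) ⊤ with hT | hT
          · rw [hT, ← hAB, hT]; simp
          · by_contra hcon
            push_neg at hcon
            rw [← hAB, min_self] at hcon
            -- contradiction with μ
            have hμr : μ r = ρ r := (Hm r hrdeg).symm
            have hμg : ρ r < μ g := lt_of_lt_of_le hcon (hρμ g)
            have hμφq : ρ r < μ (φ * q) := by
              rw [hμ.1 φ q, hAB]
              have hqT : ρ q ≠ ⊤ := by
                intro h
                rw [h, add_top] at hAB
                exact hT hAB
              exact wt_add_lt hφ (hρμ q) hqT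
            have h3 : min (μ g) (μ (φ * q)) ≤ μ r := by
              have := ev_sub hv hμ g (φ * q)
              have hgr : g - φ * q = r := by rw [← heq]; ring
              rwa [hgr] at this
            rw [hμr] at h3
            rcases min_le_iff.1 h3 with h4 | h4
            · exact absurd h4 (not_le.2 hμg)
            · exact absurd h4 (not_le.2 hμφq)
        · -- ρ (φ q) < ρ r : then ρ g ≤ ρ (φ q)
          have h1 : min (ρ g) (ρ r) ≤ ρ φ + ρ q := by
            have := ev_sub hv hρ g r
            have hgr : g - r = φ * q := by rw [← heq]; ring
            rw [hgr, hρφq] at this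
            exact this
          rcases min_le_iff.1 h1 with h2 | h2
          · exact le_min (le_of_lt (lt_of_le_of_lt h2 hAB)) h2
          · exact absurd h2 (not_le.2 hAB)
      -- now conclude
      have hrr : ρ r = ρ' r := by rw [Hm r hrdeg, Hm' r hrdeg]
      have hqq : ρ q ≤ ρ' q := ih q hqdeg
      calc ρ g ≤ min (ρ r) (ρ φ + ρ q) := key
        _ ≤ min (ρ' r) (ρ' φ + ρ' q) := by
            apply min_le_min
            · rw [hrr]
            · exact add_le_add hφ' hqq
        _ ≤ ρ' (r + φ * q) := by rw [← hρ'φq]; exact hρ'.2.1 r (φ * q)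
        _ = ρ' g := by rw [heq]

/-- Existence of the minimal disagreement degree data for `ρ < μ`. -/
private lemma exists_min_data (hv : IsVal v) (hμ : ExtVal v μ)
    (hρ : ExtVal v ρ) (hρμ : ∀ f, ρ f ≤ μ f) (hne : ρ ≠ μ) :
    ∃ (m : ℕ) (φ : Polynomial K), φ.Monic ∧ φ.natDegree = m ∧ ρ φ < μ φ ∧
      ∀ g : Polynomial K, g.degree < (m : WithBot ℕ) → ρ g = μ g := by
  have hex : ∃ n : ℕ, ∃ f : Polynomial K, f.natDegree = n ∧ ρ f < μ f := by
    rcases Function.ne_iff.1 hne with ⟨f, hf⟩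
    exact ⟨f.natDegree, f, rfl, lt_of_le_of_ne (hρμ f) hf⟩
  classical
  set m := Nat.find hex with hm
  obtain ⟨f, hfdeg, hf⟩ := Nat.find_spec hex
  have hf0 : f ≠ 0 := by
    intro h
    rw [h, ev_zero hv hρ, ev_zero hv hμ] at hf
    exact lt_irrefl _ hf
  refine ⟨m, f * Polynomial.C f.leadingCoeff⁻¹, monic_mul_leadingCoeff_inv hf0, ?_, ?_, ?_⟩
  · have : (f * Polynomial.C f.leadingCoeff⁻¹).degree = f.degree :=
      degree_mul_leadingCoeff_inv f hf0
    rw [hm, ← hfdeg]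
    exact natDegree_eq_of_degree_eq this
  · have hcT : v f.leadingCoeff⁻¹ ≠ ⊤ := by
      intro h
      have := (hv.1 _).1 h
      rw [inv_eq_zero] at this
      exact hf0 (leadingCoeff_eq_zero.1 this)
    rw [hρ.1, hμ.1, hρ.2.2, hμ.2.2]
    exact wt_add_lt hf le_rfl hcT
  · intro g hg
    by_contra hne2
    have hlt : ρ g < μ g := lt_of_le_of_ne (hρμ g) hne2
    have hg0 : g ≠ 0 := by
      intro h
      rw [h, ev_zero hv hρ, ev_zero hv hμ] at hlt
      exact lt_irrefl _ hlt
    have : m ≤ g.natDegree := Nat.find_le ⟨g, rfl, hlt⟩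
    rw [degree_eq_natDegree hg0] at hg
    exact absurd (WithBot.coe_lt_coe.1 hg) (not_lt.2 this)

/-- Comparability when both valuations agree with `μ` below the same degree `m` and
a single monic `φ` of degree `m` witnesses `ρ φ < μ φ`. -/
private lemma two_lemma (hv : IsVal v) (hμ : ExtVal v μ)
    (hρ : ExtVal v ρ) (hρμ : ∀ f, ρ f ≤ μ f)
    (hρ' : ExtVal v ρ') (hρ'μ : ∀ f, ρ' f ≤ μ f)
    {m : ℕ} (Hm : ∀ g : Polynomial K, g.degree < (m : WithBot ℕ) → ρ g = μ g)
    (Hm' : ∀ g : Polynomial K, g.degree < (m : WithBot ℕ) → ρ' g = μ g)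
    {φ : Polynomial K} (hmon : φ.Monic) (hdeg : φ.natDegree = m) (hφ : ρ φ < μ φ) :
    (∀ f, ρ f ≤ ρ' f) ∨ (∀ f, ρ' f ≤ ρ f) := by
  rcases le_total (ρ φ) (ρ' φ) with h | h
  · exact Or.inl (main_lemma hv hμ hρ hρμ hρ' Hm Hm' hmon hdeg hφ h)
  · exact Or.inr (main_lemma hv hμ hρ' hρ'μ hρ Hm' Hm hmon hdeg
      (lt_of_le_of_lt h hφ) h)

/-- the set of valuations on `K[x]` extending `v` which are strictly
smaller than `μ` is totally ordered by the pointwise order. -/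
theorem lowerSet_totallyOrdered (v : K → WithTop Λ) (μ : Polynomial K → WithTop Λ)
    (hv : IsVal v) (hμ : ExtVal v μ) :
    ∀ ρ ρ' : Polynomial K → WithTop Λ,
      ExtVal v ρ → (∀ f, ρ f ≤ μ f) → ρ ≠ μ →
      ExtVal v ρ' → (∀ f, ρ' f ≤ μ f) → ρ' ≠ μ →
      (∀ f, ρ f ≤ ρ' f) ∨ (∀ f, ρ' f ≤ ρ f) := by
  intro ρ ρ' hρ hρμ hρne hρ' hρ'μ hρ'ne
  obtain ⟨m, φ, hmon, hdeg, hφ, Hm⟩ := exists_min_data hv hμ hρ hρμ hρne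
  obtain ⟨m', φ', hmon', hdeg', hφ', Hm'⟩ := exists_min_data hv hμ hρ' hρ'μ hρ'ne
  rcases le_total m m' with hmm | hmm
  · have Hm'' : ∀ g : Polynomial K, g.degree < (m : WithBot ℕ) → ρ' g = μ g := by
      intro g hg
      exact Hm' g (lt_of_lt_of_le hg (by exact_mod_cast hmm))
    exact two_lemma hv hμ hρ hρμ hρ' hρ'μ Hm Hm'' hmon hdeg hφ
  · have Hm'' : ∀ g : Polynomial K, g.degree < (m' : WithBot ℕ) → ρ g = μ g := by
      intro g hg
      exact Hm g (lt_of_lt_of_le hg (by exact_mod_cast hmm))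
    exact (two_lemma hv hμ hρ' hρ'μ hρ hρμ Hm' Hm'' hmon' hdeg' hφ').symm
end
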